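/- Suppose 0 < x₁ < x₂, and for i = 1, 2 let yᵢ be the unique real number with yᵢ ≠ xᵢ and h(yᵢ) = h(xᵢ) + h′(xᵢ)·(yᵢ − xᵢ) (the second intersection of the tangent line at xᵢ with the graph of h). Then y₂ < y₁ < 0 and x₂ − y₂ > x₁ − y₁ > x₁; that is, the second-intersection function f(x) = y is strictly decreasing and the gap function A(x) = x − f(x) is strictly increasing and satisfies A(x) > x for x > 0. -/

import Mathlib

/-- The hill function `h(x) = arccos(tanh x)`. -/
noncomputable def hill (x : ℝ) : ℝ := Real.arccos (Real.tanh x)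

/-- The derivative of the hill function: `h'(x) = -1/cosh x`. -/
noncomputable def hill' (x : ℝ) : ℝ := -1 / Real.cosh x

lemma hasDerivAt_tanh' (x : ℝ) : HasDerivAt Real.tanh (1 / Real.cosh x ^ 2) x := by
  have hc := Real.cosh_pos x
  have h := (Real.hasDerivAt_sinh x).div (Real.hasDerivAt_cosh x) hc.ne'
  have : Real.tanh = fun y => Real.sinh y / Real.cosh y := by
    ext y; exact Real.tanh_eq_sinh_div_cosh y
  rw [this]
  convert h using 1
  · rfl
  · rfl
  · rfl
  field_simp [hc.ne']
  nlinarith [Real.cosh_sq_sub_sinh_sq x]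

lemma abs_sinh_lt_cosh (x : ℝ) : |Real.sinh x| < Real.cosh x := by
  have hc := Real.cosh_pos x
  have h : Real.sinh x ^ 2 < Real.cosh x ^ 2 := by
    nlinarith [Real.cosh_sq_sub_sinh_sq x]
  exact abs_lt_of_sq_lt_sq h hc.le

lemma tanh_mem (x : ℝ) : -1 < Real.tanh x ∧ Real.tanh x < 1 := by
  have hc := Real.cosh_pos x
  have h := abs_sinh_lt_cosh x
  rw [abs_lt] at h
  rw [Real.tanh_eq_sinh_div_cosh]
  constructor
  · rw [lt_div_iff₀ hc]; linarith [h.1]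
  · rw [div_lt_one hc]; exact h.2

lemma hasDerivAt_hill (x : ℝ) : HasDerivAt hill (hill' x) x := by
  have hc := Real.cosh_pos x
  have ht := tanh_mem x
  have harccos := Real.hasDerivAt_arccos ht.1.ne' ht.2.ne
  have h := harccos.comp x (hasDerivAt_tanh' x)
  have hsq : 1 - Real.tanh x ^ 2 = 1 / Real.cosh x ^ 2 := by
    rw [Real.tanh_eq_sinh_div_cosh]
    field_simp
    linarith [Real.cosh_sq_sub_sinh_sq x]
  have hsqrt : Real.sqrt (1 - Real.tanh x ^ 2) = 1 / Real.cosh x := by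
    rw [hsq, one_div, one_div, Real.sqrt_inv, Real.sqrt_sq hc.le]
  have : -(1 / Real.sqrt (1 - Real.tanh x ^ 2)) * (1 / Real.cosh x ^ 2) = hill' x := by
    rw [hsqrt]
    field_simp [hill']
    rw [hill']
    field_simp
  rw [← this]
  exact h

/-- The difference between `hill` and the tangent line at `x`. -/
noncomputable def gap (x t : ℝ) : ℝ := hill t - hill x - hill' x * (t - x)

lemma hasDerivAt_gap (x t : ℝ) : HasDerivAt (gap x) (hill' t - hill' x) t := by
  have h := (hasDerivAt_hill t).sub_const (hill x)
  have h2 := (hasDerivAt_id t).const_mul (hill' x)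
  have h2' : HasDerivAt (fun s => hill' x * (s - x)) (hill' x) t := by
    have := ((hasDerivAt_id t).sub_const x).const_mul (hill' x)
    simpa using this
  exact h.sub h2'

lemma deriv_gap (x t : ℝ) : deriv (gap x) t = hill' t - hill' x :=
  (hasDerivAt_gap x t).deriv

lemma cont_gap (x : ℝ) : Continuous (gap x) := by
  have : Differentiable ℝ (gap x) := fun t => (hasDerivAt_gap x t).differentiableAt
  exact this.continuous

lemma hill'_lt_hill' {a b : ℝ} (h : Real.cosh a < Real.cosh b) : hill' a < hill' b := by
  have ha := Real.cosh_pos a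
  have hb := Real.cosh_pos b
  unfold hill'
  rw [div_lt_div_iff₀ ha hb]
  nlinarith

/-- On `[-x, x]` the gap function is strictly decreasing. -/
lemma gap_strictAntiOn {x : ℝ} (hx : 0 < x) : StrictAntiOn (gap x) (Set.Icc (-x) x) := by
  apply strictAntiOn_of_deriv_neg (convex_Icc _ _) (cont_gap x).continuousOn
  intro t ht
  rw [interior_Icc, Set.mem_Ioo] at ht
  rw [deriv_gap]
  have hcl : Real.cosh t < Real.cosh x := by
    rw [Real.cosh_lt_cosh]
    rw [abs_of_pos hx, abs_lt]
    exact ht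
  linarith [hill'_lt_hill' hcl]

/-- On `[x, ∞)` the gap function is strictly increasing. -/
lemma gap_strictMonoOn_Ici {x : ℝ} (hx : 0 < x) : StrictMonoOn (gap x) (Set.Ici x) := by
  apply strictMonoOn_of_deriv_pos (convex_Ici _) (cont_gap x).continuousOn
  intro t ht
  rw [interior_Ici, Set.mem_Ioi] at ht
  rw [deriv_gap]
  have hcl : Real.cosh x < Real.cosh t := by
    rw [Real.cosh_lt_cosh, abs_of_pos hx, abs_of_pos (hx.trans ht)]
    exact ht
  linarith [hill'_lt_hill' hcl]

/-- On `(-∞, -x]` the gap function is strictly increasing. -/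
lemma gap_strictMonoOn_Iic {x : ℝ} (hx : 0 < x) : StrictMonoOn (gap x) (Set.Iic (-x)) := by
  apply strictMonoOn_of_deriv_pos (convex_Iic _) (cont_gap x).continuousOn
  intro t ht
  rw [interior_Iic, Set.mem_Iio] at ht
  rw [deriv_gap]
  have hcl : Real.cosh x < Real.cosh t := by
    rw [Real.cosh_lt_cosh, abs_of_pos hx, abs_of_neg (by linarith : t < 0)]
    linarith
  linarith [hill'_lt_hill' hcl]

lemma gap_self (x : ℝ) : gap x x = 0 := by simp [gap]

/-- For `x > 0` and `t ≥ -x`, `t ≠ x`, the gap is strictly positive. -/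
lemma gap_pos {x t : ℝ} (hx : 0 < x) (hge : -x ≤ t) (hne : t ≠ x) : 0 < gap x t := by
  rcases lt_or_gt_of_ne hne with hlt | hgt
  · have := gap_strictAntiOn hx (Set.mem_Icc.2 ⟨hge, hlt.le⟩)
      (Set.mem_Icc.2 ⟨by linarith, le_refl x⟩) hlt
    rwa [gap_self] at this
  · have := gap_strictMonoOn_Ici hx (Set.mem_Ici.2 (le_refl x))
      (Set.mem_Ici.2 hgt.le) hgt
    rwa [gap_self] at this

/-- A second intersection point lies strictly below `-x`. -/
lemma second_lt_neg {x y : ℝ} (hx : 0 < x) (hne : y ≠ x)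
    (hy : hill y = hill x + hill' x * (y - x)) : y < -x := by
  by_contra h
  push_neg at h
  have : 0 < gap x y := gap_pos hx h hne
  simp only [gap] at this
  linarith [hy ▸ this]

/-- If `0 < x₁ < x₂` and `yᵢ` is the second intersection of the tangent line at `xᵢ`
with the graph of the hill function, then `y₂ < y₁ < 0` and
`x₂ - y₂ > x₁ - y₁ > x₁`: the second-intersection function `f` is strictly
decreasing and the gap function `A(x) = x - f(x)` is strictly increasing with `A(x) > x`. -/
theorem hill_tangent_gap_monotone {x₁ x₂ y₁ y₂ : ℝ}
    (hx₁ : 0 < x₁) (hx₁₂ : x₁ < x₂)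
    (hy₁ne : y₁ ≠ x₁) (hy₁ : hill y₁ = hill x₁ + hill' x₁ * (y₁ - x₁))
    (hy₂ne : y₂ ≠ x₂) (hy₂ : hill y₂ = hill x₂ + hill' x₂ * (y₂ - x₂)) :
    y₂ < y₁ ∧ y₁ < 0 ∧ x₁ - y₁ < x₂ - y₂ ∧ x₁ < x₁ - y₁ := by
  have hx₂ : 0 < x₂ := hx₁.trans hx₁₂
  have hy₁lt : y₁ < -x₁ := second_lt_neg hx₁ hy₁ne hy₁
  have hy₂lt : y₂ < -x₂ := second_lt_neg hx₂ hy₂ne hy₂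
  -- g x₂ x₁ > 0 : strict convexity inequality
  have hB : 0 < gap x₂ x₁ := gap_pos hx₂ (by linarith) hx₁₂.ne
  -- hill' x₁ < hill' x₂
  have hslope : hill' x₁ < hill' x₂ := by
    apply hill'_lt_hill'
    rw [Real.cosh_lt_cosh, abs_of_pos hx₁, abs_of_pos hx₂]
    exact hx₁₂
  -- gap x₁ y₂ < 0
  have hgneg : gap x₁ y₂ < 0 := by
    have key : gap x₁ y₂ = -(gap x₂ x₁) + (hill' x₂ - hill' x₁) * (y₂ - x₁) := by
      simp only [gap, hy₂]; ring
    rw [key]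
    have h1 : (hill' x₂ - hill' x₁) * (y₂ - x₁) < 0 :=
      mul_neg_of_pos_of_neg (by linarith) (by linarith)
    linarith
  -- gap x₁ y₁ = 0
  have hgzero : gap x₁ y₁ = 0 := by simp only [gap, hy₁]; ring
  have hyy : y₂ < y₁ := by
    have := (gap_strictMonoOn_Iic hx₁).lt_iff_lt
      (Set.mem_Iic.2 (by linarith : y₂ ≤ -x₁)) (Set.mem_Iic.2 hy₁lt.le)
    rw [← this, hgzero]
    exact hgneg
  exact ⟨hyy, by linarith, by linarith, by linarith⟩
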